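/- Fix 0 < p < 1, E > 0 and B_max > 0, and let {E_t}_{t≥0} be the i.i.d. Bernoulli energy arrival process (E_t = E with probability p, E_t = 0 otherwise). Then every feasible online policy g satisfies liminf_{N→∞} 𝔼[(1/N) Σ_{t=1}^N (1/2)·log₂(1 + g(t))] ≤ (1/2)·log₂(1 + p·min(B_max, E)). -/

import Mathlib

open MeasureTheory ProbabilityTheory Filter

noncomputable section

variable {Ω : Type*} [MeasurableSpace Ω]

/-- The battery process: `B_0 = min(E_0, B_max)` and
`B_{t+1} = min(B_t + E_{t+1} − g(t), B_max)`. -/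
def battery (Bmax : ℝ) (Et : ℕ → Ω → ℝ) (g : ℕ → Ω → ℝ) : ℕ → Ω → ℝ
  | 0 => fun ω => min (Et 0 ω) Bmax
  | t + 1 => fun ω => min (battery Bmax Et g t ω + Et (t + 1) ω - g t ω) Bmax

/-- A feasible online policy: each `g(t)` is a measurable function of
`(E_0, …, E_t)` (causality), and `0 ≤ g(t) ≤ B_t` almost surely. -/
def FeasiblePolicy (μ : Measure Ω) (Bmax : ℝ) (Et : ℕ → Ω → ℝ)
    (g : ℕ → Ω → ℝ) : Prop :=
  (∀ t, ∃ f : (Fin (t + 1) → ℝ) → ℝ, Measurable f ∧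
      ∀ ω, g t ω = f fun i : Fin (t + 1) => Et i ω) ∧
  ∀ t, ∀ᵐ ω ∂μ, 0 ≤ g t ω ∧ g t ω ≤ battery Bmax Et g t ω

/-- The long-term average rate
`liminf_{N→∞} 𝔼[(1/N) Σ_{t=1}^N (1/2)·log₂(1 + g(t))]`. -/
def avgRate (μ : Measure Ω) (g : ℕ → Ω → ℝ) : ℝ :=
  liminf (fun N : ℕ =>
    ∫ ω, (1 / (N : ℝ)) * ∑ t ∈ Finset.Icc 1 N, (1 / 2) * Real.logb 2 (1 + g t ω) ∂μ)
    atTop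

/-- `{E_t}` is an i.i.d. Bernoulli energy arrival process: the `E_t` are measurable,
independent, and each `E_t` equals `E` with probability `p` and `0` with
probability `1 − p`. -/
def IsBernoulliArrival (μ : Measure Ω) (p E : ℝ) (Et : ℕ → Ω → ℝ) : Prop :=
  (∀ t, Measurable (Et t)) ∧
  iIndepFun Et μ ∧
  ∀ t, μ.map (Et t) =
    ENNReal.ofReal p • Measure.dirac E + ENNReal.ofReal (1 - p) • Measure.dirac 0

open Classical in
/-- The constant-fraction policy: `g'(t) = p(1−p)^j · A`, where
`j = t − max{t' ≤ t : E_{t'} = E}` is the number of time steps since the most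
recent energy arrival, and `g'(t) = 0` before the first arrival. -/
def constantFractionPolicy (p A E : ℝ) (Et : ℕ → Ω → ℝ) (t : ℕ) (ω : Ω) : ℝ :=
  if ∃ t' ≤ t, Et t' ω = E then
    p * (1 - p) ^ (t - sSup {t' | t' ≤ t ∧ Et t' ω = E}) * A
  else 0

end

section AuxOnline

variable {Ω : Type*} [MeasurableSpace Ω]

lemma myBattery_le (Bmax : ℝ) (Et g : ℕ → Ω → ℝ) (t : ℕ) (ω : Ω) :
    battery Bmax Et g t ω ≤ Bmax := by
  cases t with
  | zero => exact min_le_right _ _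
  | succ n => exact min_le_right _ _

/-- Deterministic telescoping bound. -/
lemma myKey_sum (Bmax E : ℝ) (hB0 : 0 < Bmax) (hE : 0 < E) (Et g : ℕ → Ω → ℝ) (ω : Ω)
    (he : ∀ t, Et t ω = 0 ∨ Et t ω = E)
    (hg : ∀ t, 0 ≤ g t ω ∧ g t ω ≤ battery Bmax Et g t ω) (N : ℕ) :
    0 ≤ battery Bmax Et g N ω ∧
    battery Bmax Et g N ω + ∑ t ∈ Finset.range N, g t ω ≤
      min Bmax E + ∑ s ∈ Finset.Icc 1 N, min (Et s ω) Bmax := by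
  have hmBE : (0:ℝ) ≤ min Bmax E := le_min hB0.le hE.le
  induction N with
  | zero =>
      constructor
      · rcases he 0 with h | h
        · show (0:ℝ) ≤ min (Et 0 ω) Bmax
          rw [h]; exact le_min le_rfl hB0.le
        · show (0:ℝ) ≤ min (Et 0 ω) Bmax
          rw [h]; exact le_min hE.le hB0.le
      · simp only [Finset.range_zero, Finset.sum_empty, add_zero]
        have : Finset.Icc 1 0 = (∅ : Finset ℕ) := Finset.Icc_eq_empty (by omega)
        rw [this, Finset.sum_empty, add_zero]
        rcases he 0 with h | h
        · show min (Et 0 ω) Bmax ≤ min Bmax E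
          rw [h]; exact le_trans (min_le_left _ _) hmBE
        · show min (Et 0 ω) Bmax ≤ min Bmax E
          rw [h, min_comm]
  | succ N ih =>
      have hgN := hg N
      have heN : 0 ≤ Et (N + 1) ω := by
        rcases he (N + 1) with h | h <;> simp [h, hE.le]
      have hbsucc : battery Bmax Et g (N + 1) ω =
          min (battery Bmax Et g N ω + Et (N + 1) ω - g N ω) Bmax := rfl
      have hbg : 0 ≤ battery Bmax Et g N ω - g N ω := by linarith [hgN.2]
      constructor
      · rw [hbsucc]
        exact le_min (by linarith) hB0.le
      · have hstep : battery Bmax Et g (N + 1) ω ≤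
            battery Bmax Et g N ω - g N ω + min (Et (N + 1) ω) Bmax := by
          rw [hbsucc]
          rcases le_total (Et (N + 1) ω) Bmax with h | h
          · rw [min_eq_left h]
            exact le_trans (min_le_left _ _) (by linarith)
          · rw [min_eq_right h]
            exact le_trans (min_le_right _ _) (by linarith)
        rw [Finset.sum_range_succ, Finset.sum_Icc_succ_top (Nat.le_add_left 1 N)]
        have := ih.2
        linarith
  end AuxOnline

section AuxOnline2

/-- Tangent line bound for `logb`. -/
lemma myTangent (c x : ℝ) (hc : 0 ≤ c) (hx : 0 ≤ x) :
    Real.logb 2 (1 + x) ≤ Real.logb 2 (1 + c) + (x - c) / ((1 + c) * Real.log 2) := by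
  have h2 : (0:ℝ) < Real.log 2 := Real.log_pos one_lt_two
  have hc1 : (0:ℝ) < 1 + c := by linarith
  have hx1 : (0:ℝ) < 1 + x := by linarith
  have hkey : Real.log (1 + x) ≤ Real.log (1 + c) + (x - c) / (1 + c) := by
    have h1 := Real.log_le_sub_one_of_pos (show (0:ℝ) < (1 + x) / (1 + c) by positivity)
    rw [Real.log_div hx1.ne' hc1.ne'] at h1
    have h3 : (1 + x) / (1 + c) - 1 = (x - c) / (1 + c) := by
      field_simp
      ring
    linarith
  have : Real.logb 2 (1 + x) = Real.log (1 + x) / Real.log 2 := rfl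
  rw [this]
  have h4 : Real.logb 2 (1 + c) + (x - c) / ((1 + c) * Real.log 2) =
      (Real.log (1 + c) + (x - c) / (1 + c)) / Real.log 2 := by
    rw [Real.logb, add_div, ← div_div, div_div]
  rw [h4]
  exact div_le_div_of_nonneg_right hkey h2.le

end AuxOnline2

/-- For `0 < p < 1`, `E > 0`, `B_max > 0` and an i.i.d. Bernoulli energy
arrival process, every feasible online policy `g` satisfies
`liminf_{N→∞} 𝔼[(1/N) Σ_{t=1}^N (1/2)·log₂(1 + g(t))] ≤ (1/2)·log₂(1 + p·min(B_max, E))`. -/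
theorem online_policy_upper_bound
    {Ω : Type*} [MeasurableSpace Ω] (μ : Measure Ω) [IsProbabilityMeasure μ]
    (p E Bmax : ℝ) (hp0 : 0 < p) (hp1 : p < 1) (hE : 0 < E) (hB0 : 0 < Bmax)
    (Et : ℕ → Ω → ℝ) (hEt : IsBernoulliArrival μ p E Et)
    (g : ℕ → Ω → ℝ) (hg : FeasiblePolicy μ Bmax Et g) :
    avgRate μ g ≤ (1 / 2) * Real.logb 2 (1 + p * min Bmax E) := by
  obtain ⟨hcaus, hfeas⟩ := hg
  obtain ⟨hEm, _hind, hdist⟩ := hEt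
  set m : ℝ := min Bmax E with hm_def
  have hm : 0 < m := lt_min hB0 hE
  set c : ℝ := p * m with hc_def
  have hc : 0 < c := mul_pos hp0 hm
  have hlog2 : (0:ℝ) < Real.log 2 := Real.log_pos one_lt_two
  set D : ℝ := (1 + c) * Real.log 2 with hD_def
  have hD : 0 < D := mul_pos (by linarith) hlog2
  set L : ℝ := (1 / 2) * Real.logb 2 (1 + c) with hL_def
  set K : ℝ := m * (1 + p) / (2 * D) with hK_def
  have hK : 0 ≤ K := by positivity
  -- measurability of the policy
  have hgm : ∀ t, Measurable (g t) := by
    intro t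
    obtain ⟨f, hf, hfe⟩ := hcaus t
    have : g t = fun ω => f fun i : Fin (t + 1) => Et i ω := funext hfe
    rw [this]
    exact hf.comp (measurable_pi_lambda _ fun i => hEm i)
  -- distribution facts
  have hprob : ∀ s : ℕ, μ (Et s ⁻¹' {E}) = ENNReal.ofReal p := by
    intro s
    rw [← Measure.map_apply (hEm s) (measurableSet_singleton E), hdist s]
    simp [Measure.dirac_apply' _ (measurableSet_singleton E), Set.indicator,
      hE.ne']
    intro h; exact absurd h hE.ne
  have hae_e : ∀ t : ℕ, ∀ᵐ ω ∂μ, Et t ω = 0 ∨ Et t ω = E := by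
    intro t
    have hS : MeasurableSet ({0, E} : Set ℝ) :=
      (measurableSet_singleton 0).union (measurableSet_singleton E)
    have h1 : μ (Et t ⁻¹' {0, E}) = 1 := by
      rw [← Measure.map_apply (hEm t) hS, hdist t]
      have h0 : ({0, E} : Set ℝ) = {0} ∪ {E} := rfl
      simp only [Measure.coe_add, Measure.coe_smul, Pi.add_apply, Pi.smul_apply,
        smul_eq_mul]
      rw [Measure.dirac_apply' _ hS, Measure.dirac_apply' _ hS]
      have hin1 : (E : ℝ) ∈ ({0, E} : Set ℝ) := by simp
      have hin2 : (0 : ℝ) ∈ ({0, E} : Set ℝ) := by simp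
      rw [Set.indicator_of_mem hin1, Set.indicator_of_mem hin2]
      simp only [Pi.one_apply, mul_one]
      rw [← ENNReal.ofReal_add hp0.le (by linarith)]
      norm_num
    have h2 : μ ((Et t ⁻¹' {0, E})ᶜ) = 0 := by
      rw [measure_compl (hEm t hS) (measure_ne_top μ _), h1, measure_univ]
      simp
    rw [ae_iff]
    have hset : {ω | ¬(Et t ω = 0 ∨ Et t ω = E)} = (Et t ⁻¹' {0, E})ᶜ := by
      ext ω
      simp [Set.mem_preimage, not_or]
    rw [hset]
    exact h2
  have hAE : ∀ᵐ ω ∂μ, ∀ t, (Et t ω = 0 ∨ Et t ω = E) ∧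
      (0 ≤ g t ω ∧ g t ω ≤ battery Bmax Et g t ω) := by
    rw [ae_all_iff]
    exact fun t => (hae_e t).and (hfeas t)
  -- integrability
  have hint_g : ∀ t, Integrable (g t) μ := by
    intro t
    refine (integrable_const Bmax).mono' (hgm t).aestronglyMeasurable ?_
    filter_upwards [hfeas t] with ω h
    rw [Real.norm_eq_abs, abs_of_nonneg h.1]
    exact h.2.trans (myBattery_le Bmax Et g t ω)
  have hlogm : ∀ t, Measurable (fun ω => Real.logb 2 (1 + g t ω)) := by
    intro t
    have : (fun ω => Real.logb 2 (1 + g t ω)) =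
        fun ω => Real.log (1 + g t ω) / Real.log 2 := rfl
    rw [this]
    exact (Real.measurable_log.comp (measurable_const.add (hgm t))).div_const _
  have hint_log : ∀ t, Integrable (fun ω => Real.logb 2 (1 + g t ω)) μ := by
    intro t
    refine (integrable_const (Real.logb 2 (1 + Bmax))).mono'
      (hlogm t).aestronglyMeasurable ?_
    filter_upwards [hfeas t] with ω h
    have h1 : (0:ℝ) ≤ Real.logb 2 (1 + g t ω) :=
      Real.logb_nonneg one_lt_two (by linarith [h.1])
    rw [Real.norm_eq_abs, abs_of_nonneg h1]
    exact Real.logb_le_logb_of_le one_lt_two (by linarith [h.1])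
      (by linarith [h.2.trans (myBattery_le Bmax Et g t ω)])
  have hint_min : ∀ s : ℕ, Integrable (fun ω => min (Et s ω) Bmax) μ := by
    intro s
    refine (integrable_const m).mono'
      ((hEm s).min measurable_const).aestronglyMeasurable ?_
    filter_upwards [hae_e s] with ω h
    rcases h with h | h <;> rw [h]
    · rw [min_eq_left hB0.le, Real.norm_eq_abs, abs_zero]
      exact hm.le
    · rw [min_comm, Real.norm_eq_abs, abs_of_nonneg hm.le]
  -- expected value of each capped arrival
  have hmin_int : ∀ s : ℕ, ∫ ω, min (Et s ω) Bmax ∂μ = p * m := by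
    intro s
    have hpre : MeasurableSet (Et s ⁻¹' {E}) := hEm s (measurableSet_singleton E)
    have hcong : (fun ω => min (Et s ω) Bmax) =ᵐ[μ]
        (Et s ⁻¹' {E}).indicator (fun _ => m) := by
      filter_upwards [hae_e s] with ω h
      rcases h with h | h
      · rw [h, min_eq_left hB0.le, Set.indicator_of_notMem (by
          simp only [Set.mem_preimage, Set.mem_singleton_iff, h]
          exact hE.ne)]
      · rw [h, min_comm, Set.indicator_of_mem (by simp [Set.mem_preimage, h])]
    rw [integral_congr_ae hcong, integral_indicator_const _ hpre, measureReal_def, hprob s,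
      ENNReal.toReal_ofReal hp0.le, smul_eq_mul]
  -- expected value of each g t is bounded via the telescoping sum
  have hsum_le : ∀ N : ℕ, ∑ t ∈ Finset.Icc 1 N, ∫ ω, g t ω ∂μ ≤ m + (N + 1) * (p * m) := by
    intro N
    have h1 : ∑ t ∈ Finset.Icc 1 N, ∫ ω, g t ω ∂μ =
        ∫ ω, ∑ t ∈ Finset.Icc 1 N, g t ω ∂μ :=
      (integral_finset_sum _ fun t _ => hint_g t).symm
    rw [h1]
    have h2 : ∫ ω, (m + ∑ s ∈ Finset.Icc 1 (N + 1), min (Et s ω) Bmax) ∂μ =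
        m + (N + 1) * (p * m) := by
      rw [integral_add (integrable_const m)
        (integrable_finset_sum _ fun s _ => hint_min s), integral_const,
        integral_finset_sum _ fun s _ => hint_min s]
      simp only [probReal_univ, measure_univ, ENNReal.toReal_one, smul_eq_mul, one_mul]
      rw [Finset.sum_congr rfl fun s _ => hmin_int s, Finset.sum_const,
        Nat.card_Icc]
      push_cast
      ring
    rw [← h2]
    refine integral_mono_ae (integrable_finset_sum _ fun t _ => hint_g t)
      ((integrable_const m).add (integrable_finset_sum _ fun s _ => hint_min s)) ?_
    filter_upwards [hAE] with ω h
    have hkey := myKey_sum Bmax E hB0 hE Et g ω (fun t => (h t).1) (fun t => (h t).2) (N + 1)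
    have hsub : ∑ t ∈ Finset.Icc 1 N, g t ω ≤ ∑ t ∈ Finset.range (N + 1), g t ω := by
      refine Finset.sum_le_sum_of_subset_of_nonneg ?_ fun t _ _ => (h t).2.1
      intro t ht
      simp only [Finset.mem_Icc] at ht
      simp only [Finset.mem_range]
      omega
    have hnn := hkey.1
    have := hkey.2
    calc ∑ t ∈ Finset.Icc 1 N, g t ω ≤ ∑ t ∈ Finset.range (N + 1), g t ω := hsub
      _ ≤ m + ∑ s ∈ Finset.Icc 1 (N + 1), min (Et s ω) Bmax := by linarith
  -- per-time-step bound on the log integral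
  have hJ : ∀ t : ℕ, ∫ ω, Real.logb 2 (1 + g t ω) ∂μ ≤
      Real.logb 2 (1 + c) + ((∫ ω, g t ω ∂μ) - c) / D := by
    intro t
    have hrhs_int : Integrable (fun ω => Real.logb 2 (1 + c) + (g t ω - c) / D) μ :=
      (integrable_const _).add (((hint_g t).sub (integrable_const c)).div_const _)
    have h1 : ∫ ω, Real.logb 2 (1 + g t ω) ∂μ ≤
        ∫ ω, (Real.logb 2 (1 + c) + (g t ω - c) / D) ∂μ := by
      refine integral_mono_ae (hint_log t) hrhs_int ?_
      filter_upwards [hfeas t] with ω h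
      exact myTangent c (g t ω) hc.le h.1
    have hsub : Integrable (fun ω => g t ω - c) μ := (hint_g t).sub (integrable_const c)
    have hdiv : Integrable (fun ω => (g t ω - c) / D) μ := hsub.div_const D
    have h2 : ∫ ω, (Real.logb 2 (1 + c) + (g t ω - c) / D) ∂μ =
        Real.logb 2 (1 + c) + ((∫ ω, g t ω ∂μ) - c) / D := by
      rw [integral_add (integrable_const _) hdiv, integral_const, integral_div,
        integral_sub (hint_g t) (integrable_const c), integral_const]
      simp [measure_univ]
    linarith
  -- the sequence of expected rates and its upper bound
  set u : ℕ → ℝ := fun N =>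
    ∫ ω, (1 / (N : ℝ)) * ∑ t ∈ Finset.Icc 1 N, (1 / 2) * Real.logb 2 (1 + g t ω) ∂μ
    with hu_def
  have hu_nonneg : ∀ N, 0 ≤ u N := by
    intro N
    refine integral_nonneg_of_ae ?_
    filter_upwards [hAE] with ω h
    refine mul_nonneg (by positivity) (Finset.sum_nonneg fun t _ => ?_)
    exact mul_nonneg (by norm_num)
      (Real.logb_nonneg one_lt_two (by linarith [(h t).2.1]))
  have hu_le : ∀ N : ℕ, 1 ≤ N → u N ≤ L + K / N := by
    intro N hN
    have hNpos : (0:ℝ) < N := by exact_mod_cast hN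
    have h1 : u N = (1 / (N : ℝ)) *
        ∑ t ∈ Finset.Icc 1 N, (1 / 2) * ∫ ω, Real.logb 2 (1 + g t ω) ∂μ := by
      have hrfl : u N = ∫ ω, (1 / (N : ℝ)) *
          ∑ t ∈ Finset.Icc 1 N, (1 / 2) * Real.logb 2 (1 + g t ω) ∂μ := rfl
      rw [hrfl, integral_const_mul]
      congr 1
      rw [integral_finset_sum _ fun t _ => (hint_log t).const_mul _]
      exact Finset.sum_congr rfl fun t _ => integral_const_mul _ _
    have h2 : ∑ t ∈ Finset.Icc 1 N, (1 / 2) * ∫ ω, Real.logb 2 (1 + g t ω) ∂μ ≤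
        ∑ t ∈ Finset.Icc 1 N,
          ((1 / 2) * Real.logb 2 (1 + c) + ((∫ ω, g t ω ∂μ) - c) / (2 * D)) := by
      refine Finset.sum_le_sum fun t _ => ?_
      have h' := hJ t
      have heq : ((∫ ω, g t ω ∂μ) - c) / (2 * D) =
          (1 / 2) * (((∫ ω, g t ω ∂μ) - c) / D) := by
        rw [mul_comm (2:ℝ) D, ← div_div]
        ring
      rw [heq]
      linarith
    have h3 : ∑ t ∈ Finset.Icc 1 N,
          ((1 / 2) * Real.logb 2 (1 + c) + ((∫ ω, g t ω ∂μ) - c) / (2 * D)) =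
        N * ((1 / 2) * Real.logb 2 (1 + c)) +
          ((∑ t ∈ Finset.Icc 1 N, ∫ ω, g t ω ∂μ) - N * c) / (2 * D) := by
      rw [Finset.sum_add_distrib, Finset.sum_const, Nat.card_Icc]
      simp only [Nat.add_sub_cancel, nsmul_eq_mul]
      congr 1
      rw [← Finset.sum_div, Finset.sum_sub_distrib, Finset.sum_const, Nat.card_Icc]
      simp only [Nat.add_sub_cancel, nsmul_eq_mul]
    have h4 : (∑ t ∈ Finset.Icc 1 N, ∫ ω, g t ω ∂μ) - N * c ≤ m * (1 + p) := by
      have := hsum_le N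
      rw [hc_def]
      nlinarith
    have h5 : ∑ t ∈ Finset.Icc 1 N, (1 / 2) * ∫ ω, Real.logb 2 (1 + g t ω) ∂μ ≤
        N * L + m * (1 + p) / (2 * D) := by
      rw [hL_def]
      have hdivle : ((∑ t ∈ Finset.Icc 1 N, ∫ ω, g t ω ∂μ) - N * c) / (2 * D) ≤
          m * (1 + p) / (2 * D) := by
        apply div_le_div_of_nonneg_right h4 (by positivity) |>.trans_eq rfl
      linarith [h2.trans_eq h3]
    rw [h1]
    have := mul_le_mul_of_nonneg_left h5 (by positivity : (0:ℝ) ≤ 1 / (N:ℝ))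
    calc (1 / (N : ℝ)) * ∑ t ∈ Finset.Icc 1 N, (1 / 2) * ∫ ω, Real.logb 2 (1 + g t ω) ∂μ
        ≤ (1 / (N : ℝ)) * (N * L + m * (1 + p) / (2 * D)) := this
      _ = L + K / N := by
          rw [hK_def]
          field_simp
  -- conclude via liminf comparison
  have hb_tendsto : Tendsto (fun N : ℕ => L + K / N) atTop (nhds L) := by
    have := tendsto_const_div_atTop_nhds_zero_nat K
    have h := tendsto_const_nhds (x := L) (f := atTop (α := ℕ)) |>.add this
    simpa using h
  have hliminf_b : liminf (fun N : ℕ => L + K / N) atTop = L := hb_tendsto.liminf_eq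
  have hev : ∀ᶠ N : ℕ in atTop, u N ≤ L + K / N :=
    eventually_atTop.mpr ⟨1, fun N hN => hu_le N hN⟩
  have hbd : IsBoundedUnder (· ≥ ·) atTop u :=
    ⟨0, eventually_map.mpr (Eventually.of_forall fun N => hu_nonneg N)⟩
  have hcb : IsCoboundedUnder (· ≥ ·) atTop (fun N : ℕ => L + K / N) := by
    refine isCoboundedUnder_ge_of_le atTop (x := L + K) fun N => ?_
    cases N with
    | zero => simp [hK]
    | succ n =>
        have : K / (n + 1 : ℕ) ≤ K := by
          apply div_le_self hK
          exact_mod_cast Nat.succ_le_succ (Nat.zero_le n)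
        linarith
  have := liminf_le_liminf hev hbd hcb
  rw [hliminf_b] at this
  exact this
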